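/- arXiv:math/9809016 — 2 statements merged into one kernel-verified Lean document; each statement's English description precedes it below -/
import Mathlib

section
/- Let V be a real vector space with a complex structure J, let T ⊂ V⊗ℝℂ be the √-1-eigenspace of J with basis e₁,…,e_n over ℂ. For a Hermitian n×n matrix H = (h_{ij}), set ω(H) = √-1 Σ_{i,j} h_{ij} (e_i ∧ ē_j). If H₁,…,H_n are positive semidefinite Hermitian matrices, then there exists a real number λ ≥ 0 such that ω(H₁) ∧ ⋯ ∧ ω(H_n) = λ (√-1)ⁿ (e₁∧ē₁) ∧ ⋯ ∧ (e_n∧ē_n). -/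
open ExteriorAlgebra

section aux
variable {W : Type*} [AddCommGroup W] [Module ℂ W]

lemma aux_alt_map_det {m : ℕ} {N : Type*} [AddCommGroup N] [Module ℂ N]
    (f : W [⋀^Fin m]→ₗ[ℂ] N) (M : Matrix (Fin m) (Fin m) ℂ) (w : Fin m → W) :
    f (fun i => ∑ j, M i j • w j) = M.det • f w := by
  classical
  have h1 : f (fun i => ∑ j, M i j • w j)
      = ∑ r : Fin m → Fin m, f (fun i => M i (r i) • w (r i)) :=
    f.toMultilinearMap.map_sum (g := fun i j => M i j • w j)
  have h2 : ∀ r : Fin m → Fin m,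
      f (fun i => M i (r i) • w (r i)) = (∏ i, M i (r i)) • f (fun i => w (r i)) :=
    fun r => f.toMultilinearMap.map_smul_univ (fun i => M i (r i)) (fun i => w (r i))
  have h3 : ∀ r : Fin m → Fin m, ¬ Function.Bijective r → f (fun i => w (r i)) = 0 := by
    intro r hr
    apply f.map_eq_zero_of_not_injective
    intro hinj
    have hrinj : Function.Injective r := fun i j hij => hinj (by simp [hij])
    exact hr (Finite.injective_iff_bijective.mp hrinj)
  rw [h1]
  simp_rw [h2]
  rw [← Finset.sum_filter_add_sum_filter_not Finset.univ (fun r => Function.Bijective r)]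
  have h4 : (∑ r ∈ Finset.univ.filter (fun r : Fin m → Fin m => ¬ Function.Bijective r),
      (∏ i, M i (r i)) • f (fun i => w (r i))) = 0 :=
    Finset.sum_eq_zero fun r hr => by
      rw [h3 r (Finset.mem_filter.mp hr).2, smul_zero]
  rw [h4, add_zero]
  have h5 : (∑ r ∈ Finset.univ.filter (fun r : Fin m → Fin m => Function.Bijective r),
      (∏ i, M i (r i)) • f (fun i => w (r i)))
      = ∑ σ : Equiv.Perm (Fin m), (∏ i, M i (σ i)) • f (fun i => w (σ i)) := by
    apply Finset.sum_bij (fun r h => Equiv.ofBijective r (Finset.mem_filter.mp h).2)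
    · intros; exact Finset.mem_univ _
    · intro r1 hr1 r2 hr2 heq
      funext i
      exact congrFun (congrArg (fun (e : Equiv (Fin m) (Fin m)) => (e : Fin m → Fin m)) heq) i
    · intro σ _
      exact ⟨σ, Finset.mem_filter.mpr ⟨Finset.mem_univ _, σ.bijective⟩, by ext x; simp⟩
    · intro r hr
      simp [Equiv.ofBijective_apply]
  rw [h5]
  have h6 : ∀ σ : Equiv.Perm (Fin m),
      f (fun i => w (σ i)) = (((Equiv.Perm.sign σ : ℤ) : ℂ)) • f w := by
    intro σ
    rw [show (fun i => w (σ i)) = w ∘ σ from rfl, f.map_perm w σ, Units.smul_def,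
      Int.cast_smul_eq_zsmul]
  simp_rw [h6, smul_smul]
  rw [← Finset.sum_smul]
  congr 1
  rw [← Matrix.det_transpose M, Matrix.det_apply']
  refine Finset.sum_congr rfl fun σ _ => ?_
  simp [Matrix.transpose_apply, mul_comm]

lemma aux_ι_mul_prod {n : ℕ} (x : W) (a : Fin n → W) :
    ι ℂ x * (List.ofFn fun k => ι ℂ (a k)).prod
      = ((-1 : ℂ)) ^ n • ((List.ofFn fun k => ι ℂ (a k)).prod * ι ℂ x) := by
  induction n with
  | zero => simp
  | succ n ih =>
    simp only [List.ofFn_succ, List.prod_cons]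
    have swap : ι ℂ x * ι ℂ (a 0) = -(ι ℂ (a 0) * ι ℂ x) :=
      eq_neg_of_add_eq_zero_left (ι_add_mul_swap x (a 0))
    calc ι ℂ x * (ι ℂ (a 0) * (List.ofFn fun k => ι ℂ (a k.succ)).prod)
        = (ι ℂ x * ι ℂ (a 0)) * (List.ofFn fun k => ι ℂ (a k.succ)).prod := by
          rw [mul_assoc]
      _ = -(ι ℂ (a 0) * (ι ℂ x * (List.ofFn fun k => ι ℂ (a k.succ)).prod)) := by
          rw [swap, neg_mul, mul_assoc]
      _ = -(ι ℂ (a 0) * (((-1 : ℂ)) ^ n • ((List.ofFn fun k => ι ℂ (a k.succ)).prod * ι ℂ x))) := by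
          rw [ih (fun k => a k.succ)]
      _ = ((-1 : ℂ)) ^ (n + 1) •
            (ι ℂ (a 0) * (List.ofFn fun k => ι ℂ (a k.succ)).prod * ι ℂ x) := by
          rw [mul_smul_comm, ← neg_smul, mul_assoc, pow_succ]
          ring_nf

lemma aux_pair_split (n : ℕ) : ∃ ε : ℂ, ε * ε = 1 ∧ ∀ a b : Fin n → W,
    (List.ofFn fun k => ι ℂ (a k) * ι ℂ (b k)).prod
      = ε • ((List.ofFn fun k => ι ℂ (a k)).prod * (List.ofFn fun k => ι ℂ (b k)).prod) := by
  induction n with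
  | zero => exact ⟨1, by norm_num, fun a b => by simp⟩
  | succ n ih =>
    obtain ⟨ε, hε2, hε⟩ := ih
    refine ⟨(-1) ^ n * ε, ?_, fun a b => ?_⟩
    · rw [mul_mul_mul_comm, hε2, mul_one, ← pow_add, ← two_mul, pow_mul]
      norm_num
    · simp only [List.ofFn_succ, List.prod_cons]
      set A := (List.ofFn fun k => ι ℂ (a k.succ)).prod with hA
      set B := (List.ofFn fun k => ι ℂ (b k.succ)).prod with hB
      calc ι ℂ (a 0) * ι ℂ (b 0) *
            (List.ofFn fun k => ι ℂ (a k.succ) * ι ℂ (b k.succ)).prod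
          = ι ℂ (a 0) * ι ℂ (b 0) * (ε • (A * B)) := by rw [hε]
        _ = ε • (ι ℂ (a 0) * ((ι ℂ (b 0) * A) * B)) := by
            simp only [mul_smul_comm, mul_assoc]
        _ = ε • (ι ℂ (a 0) * ((((-1 : ℂ)) ^ n • (A * ι ℂ (b 0))) * B)) := by
            rw [aux_ι_mul_prod (b 0) (fun k => a k.succ)]
        _ = ((-1) ^ n * ε) • (ι ℂ (a 0) * A * (ι ℂ (b 0) * B)) := by
            simp only [smul_mul_assoc, mul_smul_comm, smul_smul, mul_assoc]
            ring_nf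

lemma aux_det_smul {n : ℕ} (C : Matrix (Fin n) (Fin n) ℂ) (w : Fin n → W) :
    (List.ofFn fun k => ι ℂ (∑ i, C k i • w i)).prod
      = C.det • (List.ofFn fun k => ι ℂ (w k)).prod := by
  have h := aux_alt_map_det (ExteriorAlgebra.ιMulti ℂ n (M := W)) C w
  simpa only [ExteriorAlgebra.ιMulti_apply] using h

lemma aux_prod_smul {n : ℕ} (c : ℂ) (y : Fin n → ExteriorAlgebra ℂ W) :
    (List.ofFn fun k => c • y k).prod = c ^ n • (List.ofFn y).prod := by
  induction n with
  | zero => simp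
  | succ n ih =>
    rw [List.ofFn_succ, List.ofFn_succ, List.prod_cons, List.prod_cons, ih]
    rw [smul_mul_smul_comm, pow_succ]
    ring_nf

lemma aux_prod_sum {n : ℕ} (x : Fin n → Fin n → ExteriorAlgebra ℂ W) :
    (List.ofFn fun k => ∑ α, x k α).prod
      = ∑ α : Fin n → Fin n, (List.ofFn fun k => x k (α k)).prod := by
  have h := (MultilinearMap.mkPiAlgebraFin ℂ n (ExteriorAlgebra ℂ W)).map_sum (g := x)
  simpa only [MultilinearMap.mkPiAlgebraFin_apply] using h

end aux


open scoped ComplexOrder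

open scoped Matrix MatrixOrder Matrix.Norms.L2Operator in
lemma aux_psd_eq {n : ℕ} {A : Matrix (Fin n) (Fin n) ℂ} (h : A.PosSemidef) :
    ∃ B : Matrix (Fin n) (Fin n) ℂ, A = Bᴴ * B := by
  obtain ⟨B, hB⟩ := CStarAlgebra.nonneg_iff_eq_star_mul_self.mp h.nonneg
  exact ⟨B, hB⟩

/-- Lemma 2.5: in the complexification `W = V ⊗ ℝ ℂ` of a real vector space with a
complex structure (with antilinear conjugation `σ`), if `H₁,…,H_n` are positive
semidefinite Hermitian matrices and `ω(H) = √-1 Σ h_{ij} e_i ∧ ē_j`, then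
`ω(H₁) ∧ ⋯ ∧ ω(H_n) = λ (√-1)ⁿ (e₁∧ē₁) ∧ ⋯ ∧ (e_n∧ē_n)` for some `λ ≥ 0`. -/
theorem stmt4 (n : ℕ) (W : Type*) [AddCommGroup W] [Module ℂ W]
    (σ : W →ₗ[ℝ] W) (hσinv : ∀ w, σ (σ w) = w)
    (hσ : ∀ (c : ℂ) (w : W), σ (c • w) = (starRingEnd ℂ) c • σ w)
    (e : Fin n → W) (he : LinearIndependent ℂ (fun i : Fin n ⊕ Fin n => Sum.elim e (fun j => σ (e j)) i))
    (H : Fin n → Matrix (Fin n) (Fin n) ℂ) (hH : ∀ k, (H k).PosSemidef) :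
    ∃ lam : ℝ, 0 ≤ lam ∧
      (List.ofFn fun k => Complex.I •
          ∑ i, ∑ j, H k i j • (ExteriorAlgebra.ι ℂ (e i) * ExteriorAlgebra.ι ℂ (σ (e j)))).prod
        = lam • Complex.I ^ n •
            (List.ofFn fun i =>
              ExteriorAlgebra.ι ℂ (e i) * ExteriorAlgebra.ι ℂ (σ (e i))).prod := by
  classical
  choose B hB using fun k => aux_psd_eq (hH k)
  -- the rank-one vectors
  set f : Fin n → Fin n → W := fun k α => ∑ i, (starRingEnd ℂ) (B k α i) • e i with hf
  have hσf : ∀ k α, σ (f k α) = ∑ j, B k α j • σ (e j) := by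
    intro k α
    rw [hf]
    simp only [map_sum]
    refine Finset.sum_congr rfl fun i _ => ?_
    rw [hσ]
    simp
  -- per factor rewrite
  have factor : ∀ k, (∑ i, ∑ j, H k i j • (ExteriorAlgebra.ι ℂ (e i) * ExteriorAlgebra.ι ℂ (σ (e j))))
      = ∑ α, (ExteriorAlgebra.ι ℂ (f k α) * ExteriorAlgebra.ι ℂ (σ (f k α))) := by
    intro k
    have expand : ∀ α, ExteriorAlgebra.ι ℂ (f k α) * ExteriorAlgebra.ι ℂ (σ (f k α))
        = ∑ i, ∑ j, ((starRingEnd ℂ) (B k α i) * B k α j) •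
            (ExteriorAlgebra.ι ℂ (e i) * ExteriorAlgebra.ι ℂ (σ (e j))) := by
      intro α
      rw [hσf, hf]
      simp only [map_sum, map_smul, Finset.sum_mul, Finset.mul_sum, smul_mul_smul_comm]
      rw [Finset.sum_comm]
    symm
    rw [Finset.sum_congr rfl fun α _ => expand α]
    rw [Finset.sum_comm]
    refine Finset.sum_congr rfl fun i _ => ?_
    rw [Finset.sum_comm]
    refine Finset.sum_congr rfl fun j _ => ?_
    rw [← Finset.sum_smul]
    congr 1
    rw [hB k, Matrix.mul_apply]
    refine Finset.sum_congr rfl fun α _ => ?_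
    rw [Matrix.conjTranspose_apply]
    rfl
  obtain ⟨ε, hε2, hε⟩ := aux_pair_split (W := W) n
  set P : ExteriorAlgebra ℂ W := (List.ofFn fun i =>
    ExteriorAlgebra.ι ℂ (e i) * ExteriorAlgebra.ι ℂ (σ (e i))).prod with hP
  set d : (Fin n → Fin n) → ℂ := fun α => (Matrix.of fun k j => B k (α k) j).det with hd
  have hEE : (List.ofFn fun k => ExteriorAlgebra.ι ℂ (e k)).prod *
      (List.ofFn fun k => ExteriorAlgebra.ι ℂ (σ (e k))).prod = ε • P := by
    rw [hP, hε e (fun j => σ (e j)), smul_smul, hε2, one_smul]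
  have term : ∀ α : Fin n → Fin n,
      (List.ofFn fun k =>
        ExteriorAlgebra.ι ℂ (f k (α k)) * ExteriorAlgebra.ι ℂ (σ (f k (α k)))).prod
        = ((Complex.normSq (d α) : ℝ) : ℂ) • P := by
    intro α
    have hA : (List.ofFn fun k => ExteriorAlgebra.ι ℂ (f k (α k))).prod
        = (Matrix.of fun k i => (starRingEnd ℂ) (B k (α k) i)).det •
          (List.ofFn fun k => ExteriorAlgebra.ι ℂ (e k)).prod := by
      have h := aux_det_smul (Matrix.of fun k i => (starRingEnd ℂ) (B k (α k) i)) e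
      simpa [hf] using h
    have hBp : (List.ofFn fun k => ExteriorAlgebra.ι ℂ (σ (f k (α k)))).prod
        = d α • (List.ofFn fun k => ExteriorAlgebra.ι ℂ (σ (e k))).prod := by
      have h := aux_det_smul (Matrix.of fun k j => B k (α k) j) (fun j => σ (e j))
      simp only [hσf]
      simpa [hd] using h
    have hdet : (Matrix.of fun k i => (starRingEnd ℂ) (B k (α k) i)).det
        = (starRingEnd ℂ) (d α) := by
      rw [hd]
      exact ((starRingEnd ℂ).map_det (Matrix.of fun k j => B k (α k) j)).symm
    rw [hε, hA, hBp, hdet, smul_mul_assoc, mul_smul_comm, hEE, smul_smul, smul_smul, smul_smul]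
    congr 1
    have h1 : ((Complex.normSq (d α) : ℝ) : ℂ) = (starRingEnd ℂ) (d α) * d α :=
      Complex.normSq_eq_conj_mul_self
    linear_combination ((starRingEnd ℂ) (d α) * d α) * hε2 - h1
  refine ⟨∑ α : Fin n → Fin n, Complex.normSq (d α),
    Finset.sum_nonneg fun α _ => Complex.normSq_nonneg _, ?_⟩
  have lhs1 : (List.ofFn fun k => Complex.I •
      ∑ i, ∑ j, H k i j • (ExteriorAlgebra.ι ℂ (e i) * ExteriorAlgebra.ι ℂ (σ (e j)))).prod
      = Complex.I ^ n • ∑ α : Fin n → Fin n,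
          (List.ofFn fun k =>
            ExteriorAlgebra.ι ℂ (f k (α k)) * ExteriorAlgebra.ι ℂ (σ (f k (α k)))).prod := by
    simp_rw [factor]
    rw [aux_prod_smul]
    congr 1
    exact aux_prod_sum _
  rw [lhs1, Finset.sum_congr rfl fun α _ => term α, ← Finset.sum_smul, ← Complex.ofReal_sum,
    smul_comm, Complex.coe_smul]
  rfl
end

section
/- Let A be an abelian group and h : A → ℝ a function such that the function (x,y,z) ↦ h(x+y+z) - h(x+y) - h(y+z) - h(z+x) + h(x) + h(y) + h(z) is bounded on A³. Then there exist a unique symmetric bi-additive form q : A × A → ℝ and a unique additive function l : A → ℝ such that h(x) - q(x,x) - l(x) is bounded on A. Moreover, q(x,x) = lim_{n→∞} 2^{-2n} h(2ⁿ x). -/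
open Filter Topology

section Aux
variable {A : Type*} [AddCommGroup A]

private lemma addf_nsmul (φ : A → ℝ) (hφ : ∀ x y, φ (x + y) = φ x + φ y) :
    ∀ (n : ℕ) (x : A), φ (n • x) = n * φ x := by
  have h0 : φ 0 = 0 := by have := hφ 0 0; simp at this; linarith
  intro n x
  induction n with
  | zero => simpa using h0
  | succ k ih => rw [succ_nsmul, hφ, ih]; push_cast; ring

/-- Tate limit construction. -/
private lemma tate_limit (g : A → ℝ) (C r : ℝ) (hr : 2 ≤ r)
    (H : ∀ x, |g (x + x) - r * g x| ≤ C) :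
    ∃ q : A → ℝ,
      (∀ x, Tendsto (fun n : ℕ => g ((2 ^ n) • x) / r ^ n) atTop (nhds (q x))) ∧
      (∀ x, |q x - g x| ≤ C / (r - 1)) := by
  have hr0 : (0:ℝ) < r := by linarith
  have hrinv : 1 / r < 1 := by
    rw [div_lt_one hr0]; linarith
  have key : ∀ x : A, ∃ L : ℝ,
      Tendsto (fun n : ℕ => g ((2 ^ n) • x) / r ^ n) atTop (nhds L) ∧
      |L - g x| ≤ C / (r - 1) := by
    intro x
    set u : ℕ → ℝ := fun n => g ((2 ^ n) • x) / r ^ n with hu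
    have hstep : ∀ n : ℕ, dist (u n) (u (n + 1)) ≤ (C / r) * (1 / r) ^ n := by
      intro n
      have e : (2 ^ (n + 1)) • x = (2 ^ n) • x + (2 ^ n) • x := by
        rw [pow_succ, mul_comm, mul_smul, two_smul]
      have hb := H ((2 ^ n) • x)
      have hrn : (0:ℝ) < r ^ n := pow_pos hr0 n
      rw [Real.dist_eq, hu]
      simp only [e]
      have : g ((2 ^ n) • x) / r ^ n - g ((2 ^ n) • x + (2 ^ n) • x) / r ^ (n + 1)
          = -((g ((2 ^ n) • x + (2 ^ n) • x) - r * g ((2 ^ n) • x)) / r ^ (n + 1)) := by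
        field_simp
        ring
      rw [this, abs_neg, abs_div, abs_of_pos (pow_pos hr0 (n+1))]
      have hrw : C / r * (1 / r) ^ n = C / r ^ (n + 1) := by
        rw [div_pow, one_pow, div_mul_div_comm, mul_one, ← pow_succ']
      rw [hrw]
      gcongr
    have hc : CauchySeq u := cauchySeq_of_le_geometric (1/r) (C/r) hrinv hstep
    obtain ⟨L, hL⟩ := cauchySeq_tendsto_of_complete hc
    refine ⟨L, hL, ?_⟩
    have := dist_le_of_le_geometric_of_tendsto₀ (1/r) (C/r) hrinv hstep hL
    have hu0 : u 0 = g x := by simp [hu]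
    rw [hu0, Real.dist_eq] at this
    have he : C / r / (1 - 1/r) = C / (r - 1) := by
      field_simp
    rw [he] at this
    calc |L - g x| = |g x - L| := abs_sub_comm _ _
      _ ≤ C / (r - 1) := this
  choose q hq1 hq2 using key
  exact ⟨q, hq1, hq2⟩

/-- the second bullet: any valid decomposition has the Tate limit as quadratic part. -/
private lemma tendsto_of_decomp (h : A → ℝ) (q : A → A → ℝ) (l : A → ℝ)
    (hsym : ∀ x y, q x y = q y x)
    (hadd : ∀ x y z, q (x + y) z = q x z + q y z)
    (hladd : ∀ x y, l (x + y) = l x + l y)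
    (C : ℝ) (hb : ∀ x, |h x - q x x - l x| ≤ C) (x : A) :
    Tendsto (fun n : ℕ => h ((2 ^ n) • x) / 4 ^ n) atTop (nhds (q x x)) := by
  have q1 : ∀ (n : ℕ) (y z : A), q (n • y) z = n * q y z := by
    intro n y z
    exact addf_nsmul (fun a => q a z) (fun a b => hadd a b z) n y
  have q2 : ∀ (n : ℕ) (y z : A), q y (n • z) = n * q y z := by
    intro n y z; rw [hsym, q1, hsym]
  have diag : ∀ n : ℕ, q ((2 ^ n) • x) ((2 ^ n) • x) = 4 ^ n * q x x := by
    intro n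
    rw [q1, q2]
    have : ((2:ℝ) ^ n) * ((2:ℝ) ^ n) = 4 ^ n := by
      rw [← mul_pow]; norm_num
    push_cast
    rw [← mul_assoc, this]
  have lsm : ∀ n : ℕ, l ((2 ^ n) • x) = 2 ^ n * l x := by
    intro n
    have := addf_nsmul l hladd (2 ^ n) x
    push_cast at this ⊢; exact this
  rw [← tendsto_sub_nhds_zero_iff]
  apply squeeze_zero_norm (a := fun n : ℕ => C * (1/4 : ℝ) ^ n + |l x| * (1/2 : ℝ) ^ n)
  · intro n
    have h4 : (0:ℝ) < (4:ℝ) ^ n := by positivity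
    have h2 : (0:ℝ) < (2:ℝ) ^ n := by positivity
    have hbn := hb ((2 ^ n) • x)
    rw [diag n, lsm n] at hbn
    have e1 : h ((2 ^ n) • x) / 4 ^ n - q x x
        = (h ((2 ^ n) • x) - 4 ^ n * q x x - 2 ^ n * l x) / 4 ^ n + l x / 2 ^ n := by
      have h42 : (4:ℝ) ^ n = 2 ^ n * 2 ^ n := by rw [← mul_pow]; norm_num
      field_simp
      rw [h42]; ring
    rw [Real.norm_eq_abs, e1]
    calc |(h ((2 ^ n) • x) - 4 ^ n * q x x - 2 ^ n * l x) / 4 ^ n + l x / 2 ^ n|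
        ≤ |(h ((2 ^ n) • x) - 4 ^ n * q x x - 2 ^ n * l x) / 4 ^ n| + |l x / 2 ^ n| :=
          abs_add_le _ _
      _ ≤ C * (1/4) ^ n + |l x| * (1/2) ^ n := by
          rw [abs_div, abs_div, abs_of_pos h4, abs_of_pos h2]
          gcongr
          · rw [div_le_iff₀ h4]
            calc |h ((2 ^ n) • x) - 4 ^ n * q x x - 2 ^ n * l x| ≤ C := hbn
              _ = C * (1/4)^n * 4^n := by rw [mul_assoc, ← mul_pow]; norm_num
          · rw [div_le_iff₀ h2]
            have : |l x| * (1/2)^n * 2^n = |l x| := by rw [mul_assoc, ← mul_pow]; norm_num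
            rw [this]
  · have t1 : Tendsto (fun n : ℕ => C * (1/4 : ℝ) ^ n) atTop (nhds 0) := by
      simpa using (tendsto_pow_atTop_nhds_zero_of_lt_one (by norm_num : (0:ℝ) ≤ 1/4)
        (by norm_num)).const_mul C
    have t2 : Tendsto (fun n : ℕ => |l x| * (1/2 : ℝ) ^ n) atTop (nhds 0) := by
      simpa using (tendsto_pow_atTop_nhds_zero_of_lt_one (by norm_num : (0:ℝ) ≤ 1/2)
        (by norm_num)).const_mul |l x|
    simpa using t1.add t2

private lemma polar (q : A → A → ℝ) (hs : ∀ x y, q x y = q y x)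
    (ha : ∀ x y z, q (x + y) z = q x z + q y z) (x y : A) :
    q (x + y) (x + y) = q x x + 2 * q x y + q y y := by
  have h1 : q (x + y) (x + y) = q x (x + y) + q y (x + y) := ha x y (x + y)
  have h2 : q x (x + y) = q x x + q x y := by
    rw [hs x (x + y), ha x y x, hs x x, hs y x]
  have h3 : q y (x + y) = q x y + q y y := by
    rw [hs y (x + y), ha x y y, hs y y]
  rw [h1, h2, h3]; ring

private lemma add_bounded_zero (e : A → ℝ) (he : ∀ x y, e (x + y) = e x + e y)
    (C : ℝ) (hb : ∀ x, |e x| ≤ C) : ∀ x, e x = 0 := by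
  intro x
  by_contra hx
  have hpos : 0 < |e x| := abs_pos.mpr hx
  obtain ⟨n, hn⟩ := exists_nat_gt (C / |e x|)
  have h1 : e (n • x) = n * e x := addf_nsmul e he n x
  have h2 : |e (n • x)| ≤ C := hb _
  rw [h1, abs_mul, Nat.abs_cast] at h2
  have : C / |e x| < n := hn
  rw [div_lt_iff₀ hpos] at this
  linarith

end Aux

private lemma tendsto_zero_geom (f : ℕ → ℝ) (C r : ℝ) (hr : 1 < r)
    (hf : ∀ n : ℕ, |f n| ≤ C / r ^ n) : Tendsto f atTop (nhds 0) := by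
  have hr0 : (0:ℝ) < r := by linarith
  apply squeeze_zero_norm (a := fun n : ℕ => C * (1/r) ^ n)
  · intro n
    rw [Real.norm_eq_abs]
    calc |f n| ≤ C / r ^ n := hf n
      _ = C * (1/r) ^ n := by rw [div_pow, one_pow]; ring
  · simpa using (tendsto_pow_atTop_nhds_zero_of_lt_one
      (le_of_lt (by positivity : (0:ℝ) < 1/r)) ((div_lt_one hr0).mpr hr)).const_mul C

/-- A function on an abelian group with bounded "cube" defect decomposes uniquely as a
quadratic part (a symmetric bi-additive form evaluated on the diagonal) plus a linear
part, up to bounded functions; moreover the quadratic part is the Tate limit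
`q(x,x) = lim 2^{-2n} h(2ⁿ x)`. -/
theorem stmt7 (A : Type*) [AddCommGroup A] (h : A → ℝ)
    (hcube : ∃ C : ℝ, ∀ x y z : A,
      |h (x + y + z) - h (x + y) - h (y + z) - h (z + x) + h x + h y + h z| ≤ C) :
    (∃! p : (A → A → ℝ) × (A → ℝ),
      (∀ x y, p.1 x y = p.1 y x) ∧
      (∀ x y z, p.1 (x + y) z = p.1 x z + p.1 y z) ∧
      (∀ x y, p.2 (x + y) = p.2 x + p.2 y) ∧
      (∃ C : ℝ, ∀ x, |h x - p.1 x x - p.2 x| ≤ C)) ∧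
    (∀ p : (A → A → ℝ) × (A → ℝ),
      ((∀ x y, p.1 x y = p.1 y x) ∧
       (∀ x y z, p.1 (x + y) z = p.1 x z + p.1 y z) ∧
       (∀ x y, p.2 (x + y) = p.2 x + p.2 y) ∧
       (∃ C : ℝ, ∀ x, |h x - p.1 x x - p.2 x| ≤ C)) →
      ∀ x, Filter.Tendsto (fun n : ℕ => h ((2 ^ n) • x) / 4 ^ n)
        Filter.atTop (nhds (p.1 x x))) := by
  obtain ⟨C, hC⟩ := hcube
  -- second differences as a function on the product
  set F : A × A → ℝ := fun p => h (p.1 + p.2) - h p.1 - h p.2 with hF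
  have HF : ∀ p : A × A, |F (p + p) - 4 * F p| ≤ 3 * C := by
    rintro ⟨x, y⟩
    have t1 := hC x x (y + y)
    rw [add_comm x (y + y)] at t1
    have t2 := hC y y x
    rw [add_comm y x] at t2
    simp only [hF, Prod.mk_add_mk]
    obtain ⟨a1, b1⟩ := abs_le.mp t1
    obtain ⟨a2, b2⟩ := abs_le.mp t2
    rw [abs_le]
    constructor <;> linarith
  obtain ⟨qF, hqFt, hqFb⟩ := tate_limit F (3 * C) 4 (by norm_num) HF
  have hqFb' : ∀ p, |qF p - F p| ≤ C := by
    intro p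
    have := hqFb p
    have e : 3 * C / ((4:ℝ) - 1) = C := by norm_num
    rwa [e] at this
  set q : A → A → ℝ := fun x y => qF (x, y) with hq
  -- symmetry
  have hqsym : ∀ x y, q x y = q y x := by
    intro x y
    refine tendsto_nhds_unique (hqFt (x, y)) ((hqFt (y, x)).congr ?_)
    intro n
    simp only [hF, Prod.smul_mk]
    rw [add_comm ((2 ^ n) • y) ((2 ^ n) • x)]
    ring
  -- bi-additivity
  have hqadd : ∀ x y z, q (x + y) z = q x z + q y z := by
    intro x y z
    have h1 : Tendsto (fun n : ℕ => F ((2 ^ n) • (x + y, z)) / 4 ^ n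
        - F ((2 ^ n) • (x, z)) / 4 ^ n - F ((2 ^ n) • (y, z)) / 4 ^ n)
        atTop (nhds (q (x + y) z - q x z - q y z)) :=
      ((hqFt (x + y, z)).sub (hqFt (x, z))).sub (hqFt (y, z))
    have h2 : Tendsto (fun n : ℕ => F ((2 ^ n) • (x + y, z)) / 4 ^ n
        - F ((2 ^ n) • (x, z)) / 4 ^ n - F ((2 ^ n) • (y, z)) / 4 ^ n)
        atTop (nhds 0) := by
      apply tendsto_zero_geom _ C 4 (by norm_num)
      intro n
      have hc := hC ((2 ^ n) • x) ((2 ^ n) • y) ((2 ^ n) • z)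
      rw [add_comm ((2 ^ n) • z) ((2 ^ n) • x)] at hc
      have h4 : (0:ℝ) < (4:ℝ) ^ n := by positivity
      have e : F ((2 ^ n) • (x + y, z)) / 4 ^ n
          - F ((2 ^ n) • (x, z)) / 4 ^ n - F ((2 ^ n) • (y, z)) / 4 ^ n
          = (h ((2 ^ n) • x + (2 ^ n) • y + (2 ^ n) • z)
            - h ((2 ^ n) • x + (2 ^ n) • y) - h ((2 ^ n) • y + (2 ^ n) • z)
            - h ((2 ^ n) • x + (2 ^ n) • z)
            + h ((2 ^ n) • x) + h ((2 ^ n) • y) + h ((2 ^ n) • z)) / 4 ^ n := by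
        simp only [hF, Prod.smul_mk, smul_add]
        ring
      rw [e, abs_div, abs_of_pos h4]
      gcongr
    have := tendsto_nhds_unique h1 h2
    linarith
  -- the quasi-additive remainder
  set g : A → ℝ := fun x => h x - q x x / 2 with hg
  have hgdef : ∀ x y, |g (x + y) - g x - g y| ≤ C := by
    intro x y
    have hp := polar q hqsym hqadd x y
    have hb : |q x y - (h (x + y) - h x - h y)| ≤ C := by
      have := hqFb' (x, y)
      simpa only [hF] using this
    have e : g (x + y) - g x - g y = -(q x y - (h (x + y) - h x - h y)) := by
      simp only [hg]
      rw [hp]; ring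
    rw [e, abs_neg]
    exact hb
  obtain ⟨l, hlt, hlb⟩ := tate_limit g C 2 (le_refl 2) (by
    intro x
    have e : g (x + x) - 2 * g x = g (x + x) - g x - g x := by ring
    rw [e]; exact hgdef x x)
  have hlb' : ∀ x, |l x - g x| ≤ C := by
    intro x
    have := hlb x
    have e : C / ((2:ℝ) - 1) = C := by norm_num
    rwa [e] at this
  have hladd : ∀ x y, l (x + y) = l x + l y := by
    intro x y
    have h1 : Tendsto (fun n : ℕ => g ((2 ^ n) • (x + y)) / 2 ^ n
        - g ((2 ^ n) • x) / 2 ^ n - g ((2 ^ n) • y) / 2 ^ n)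
        atTop (nhds (l (x + y) - l x - l y)) :=
      ((hlt (x + y)).sub (hlt x)).sub (hlt y)
    have h2 : Tendsto (fun n : ℕ => g ((2 ^ n) • (x + y)) / 2 ^ n
        - g ((2 ^ n) • x) / 2 ^ n - g ((2 ^ n) • y) / 2 ^ n)
        atTop (nhds 0) := by
      apply tendsto_zero_geom _ C 2 one_lt_two
      intro n
      have h2n : (0:ℝ) < (2:ℝ) ^ n := by positivity
      have e : g ((2 ^ n) • (x + y)) / 2 ^ n - g ((2 ^ n) • x) / 2 ^ n
          - g ((2 ^ n) • y) / 2 ^ n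
          = (g ((2 ^ n) • x + (2 ^ n) • y) - g ((2 ^ n) • x) - g ((2 ^ n) • y)) / 2 ^ n := by
        rw [smul_add]; ring
      rw [e, abs_div, abs_of_pos h2n]
      gcongr
      exact hgdef _ _
    have := tendsto_nhds_unique h1 h2
    linarith
  -- the decomposition
  have psym : ∀ x y, q x y / 2 = q y x / 2 := fun x y => by rw [hqsym]
  have padd : ∀ x y z, q (x + y) z / 2 = q x z / 2 + q y z / 2 := fun x y z => by
    rw [hqadd]; ring
  have hbound : ∀ x, |h x - q x x / 2 - l x| ≤ C := by
    intro x
    have e : h x - q x x / 2 - l x = -(l x - g x) := by simp only [hg]; ring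
    rw [e, abs_neg]
    exact hlb' x
  have hlim := fun (q' : A → A → ℝ) (l' : A → ℝ) hs' ha' hl' C' hb' x =>
    tendsto_of_decomp h q' l' hs' ha' hl' C' hb' x
  constructor
  · refine ⟨(fun x y => q x y / 2, l), ⟨psym, padd, hladd, ⟨C, hbound⟩⟩, ?_⟩
    rintro ⟨q', l'⟩ ⟨hs', ha', hl', C', hb'⟩
    dsimp only at hs' ha' hl' hb'
    have hd : ∀ x, q' x x = q x x / 2 := by
      intro x
      exact tendsto_nhds_unique
        (tendsto_of_decomp h q' l' hs' ha' hl' C' hb' x)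
        (tendsto_of_decomp h (fun a b => q a b / 2) l psym padd hladd C hbound x)
    have hq' : ∀ x y, q' x y = q x y / 2 := by
      intro x y
      have p1 := polar q' hs' ha' x y
      have p2 := polar (fun a b => q a b / 2) psym padd x y
      rw [hd, hd, hd] at p1
      linarith
    have he : ∀ x, l' x - l x = 0 := by
      apply add_bounded_zero (fun x => l' x - l x)
        (by intro x y
            show l' (x + y) - l (x + y) = l' x - l x + (l' y - l y)
            rw [hl', hladd]; ring) (C' + C)
      intro x
      have b1 := abs_le.mp (hb' x)
      have b2 := abs_le.mp (hbound x)
      have hdx := hd x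
      show |l' x - l x| ≤ C' + C
      rw [abs_le]
      constructor <;> linarith [b1.1, b1.2, b2.1, b2.2]
    have e1 : q' = fun x y => q x y / 2 := funext fun x => funext fun y => hq' x y
    have e2 : l' = l := funext fun x => by have := he x; linarith
    rw [Prod.mk.injEq]
    exact ⟨e1, e2⟩
  · rintro p ⟨hs, ha, hl, ⟨C', hb⟩⟩ x
    exact tendsto_of_decomp h p.1 p.2 hs ha hl C' hb x
end
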